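/- Let M be an oriented pseudo-Riemannian surface in ℍ₃(τ) with unit normal N, g(N,N) = ε, shape operator A, ν = ε g(N,E₃), and T the tangential part of E₃. Then the Codazzi equation reads: ∇_X A(Y) − ∇_Y A(X) − A([X,Y]) = −4ενexecuted τ²[g(Y,T)X − g(X,T)Y] for all tangent fields X, Y (with the displayed right-hand side −4ε ν τ²[g(Y,T)X − g(X,T)Y]). -/
import Mathlib


noncomputable section

/-- Points of the Heisenberg group ℍ₃(τ), identified with ℝ³ (coordinates (x,y,z)). -/
abbrev Pt : Type := ℝ × ℝ × ℝ
/-- Tangent vectors, identified with ℝ³. -/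
abbrev Vec : Type := ℝ × ℝ × ℝ
/-- Vector fields on ℝ³. -/
abbrev VF : Type := Pt → Vec

/-- The Lorentzian metric g_τ = dx² + dy² − (dz − τ(y dx − x dy))² evaluated at `p`
on tangent vectors `U`, `V`. -/
def gH (τ : ℝ) (p : Pt) (U V : Vec) : ℝ :=
  U.1 * V.1 + U.2.1 * V.2.1
    - (U.2.2 - τ * (p.2.1 * U.1 - p.1 * U.2.1))
      * (V.2.2 - τ * (p.2.1 * V.1 - p.1 * V.2.1))

/-- E₁ = ∂x + τ y ∂z. -/
def E1 (τ : ℝ) : VF := fun p => (1, 0, τ * p.2.1)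
/-- E₂ = ∂y − τ x ∂z. -/
def E2 (τ : ℝ) : VF := fun p => (0, 1, -(τ * p.1))
/-- E₃ = ∂z. -/
def E3 : VF := fun _ => (0, 0, 1)

/-- Lie bracket of vector fields on ℝ³. -/
def bracket (X Y : VF) : VF := fun p => fderiv ℝ Y p (X p) - fderiv ℝ X p (Y p)

/-- Coefficients of a tangent vector `U` at `p` with respect to the frame E₁,E₂,E₃. -/
def coV (τ : ℝ) (p : Pt) (U : Vec) : Vec :=
  (U.1, U.2.1, U.2.2 - τ * (p.2.1 * U.1 - p.1 * U.2.1))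

/-- The Lorentzian cross product ∧ of ℍ₃(τ):
U ∧ V = (u₂v₃ − u₃v₂)E₁ − (u₁v₃ − u₃v₁)E₂ − (u₁v₂ − u₂v₁)E₃ in frame coefficients. -/
def crossP (τ : ℝ) (p : Pt) (U V : Vec) : Vec :=
  ((coV τ p U).2.1 * (coV τ p V).2.2 - (coV τ p U).2.2 * (coV τ p V).2.1) • E1 τ p
  - ((coV τ p U).1 * (coV τ p V).2.2 - (coV τ p U).2.2 * (coV τ p V).1) • E2 τ p
  - ((coV τ p U).1 * (coV τ p V).2.1 - (coV τ p U).2.1 * (coV τ p V).1) • E3 p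

/-- The Levi-Civita connection ∇^τ of g_τ, written out in the frame E₁,E₂,E₃,
using the Christoffel table ∇_{E₂}E₁ = τE₃ = −∇_{E₁}E₂, ∇_{E₃}E₁ = −τE₂ = ∇_{E₁}E₃,
∇_{E₃}E₂ = τE₁ = ∇_{E₂}E₃, ∇_{E_i}E_i = 0. -/
def nablaH (τ : ℝ) (X Y : VF) : VF := fun p =>
  (fderiv ℝ (fun q => (coV τ q (Y q)).1) p (X p)) • E1 τ p
  + (fderiv ℝ (fun q => (coV τ q (Y q)).2.1) p (X p)) • E2 τ p
  + (fderiv ℝ (fun q => (coV τ q (Y q)).2.2) p (X p)) • E3 p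
  + (τ * ((coV τ p (X p)).2.1 * (coV τ p (Y p)).2.2
        + (coV τ p (X p)).2.2 * (coV τ p (Y p)).2.1)) • E1 τ p
  - (τ * ((coV τ p (X p)).1 * (coV τ p (Y p)).2.2
        + (coV τ p (X p)).2.2 * (coV τ p (Y p)).1)) • E2 τ p
  + (τ * ((coV τ p (X p)).2.1 * (coV τ p (Y p)).1
        - (coV τ p (X p)).1 * (coV τ p (Y p)).2.1)) • E3 p

/-- The Riemann curvature tensor, R(X,Y)Z = ∇_X∇_Y Z − ∇_Y∇_X Z − ∇_{[X,Y]}Z. -/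
def Rcurv (τ : ℝ) (X Y Z : VF) : VF := fun p =>
  nablaH τ X (nablaH τ Y Z) p - nablaH τ Y (nablaH τ X Z) p
    - nablaH τ (bracket X Y) Z p

/-- The pointwise curvature tensor of ℍ₃(τ) in the algebraic form
R(X,Y)Z = 3τ²[g(Y,Z)X − g(X,Z)Y] + 4τ²[g(Y,E₃)g(Z,E₃)X − g(X,E₃)g(Z,E₃)Y
 + g(Y,Z)g(X,E₃)E₃ − g(X,Z)g(Y,E₃)E₃]. -/
def Rpt (τ : ℝ) (p : Pt) (X Y Z : Vec) : Vec :=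
  (3 * τ ^ 2) • (gH τ p Y Z • X - gH τ p X Z • Y)
  + (4 * τ ^ 2) • ((gH τ p Y (E3 p) * gH τ p Z (E3 p)) • X
    - (gH τ p X (E3 p) * gH τ p Z (E3 p)) • Y
    + (gH τ p Y Z * gH τ p X (E3 p)) • E3 p
    - (gH τ p X Z * gH τ p Y (E3 p)) • E3 p)


lemma gH_comm (τ : ℝ) (p : Pt) (U V : Vec) : gH τ p U V = gH τ p V U := by
  simp [gH]; ring
lemma gH_add_left (τ : ℝ) (p : Pt) (U V W : Vec) :
    gH τ p (U + V) W = gH τ p U W + gH τ p V W := by simp [gH]; ring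
lemma gH_sub_left (τ : ℝ) (p : Pt) (U V W : Vec) :
    gH τ p (U - V) W = gH τ p U W - gH τ p V W := by simp [gH]; ring
lemma gH_smul_left (τ : ℝ) (p : Pt) (c : ℝ) (U V : Vec) :
    gH τ p (c • U) V = c * gH τ p U V := by simp [gH, smul_eq_mul]; ring
lemma gH_add_right (τ : ℝ) (p : Pt) (U V W : Vec) :
    gH τ p U (V + W) = gH τ p U V + gH τ p U W := by simp [gH]; ring
lemma gH_smul_right (τ : ℝ) (p : Pt) (c : ℝ) (U V : Vec) :
    gH τ p U (c • V) = c * gH τ p U V := by simp [gH, smul_eq_mul]; ring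

lemma gH_Rpt (τ : ℝ) (p : Pt) (X Y Z N : Vec) :
    gH τ p (Rpt τ p X Y Z) N =
      3 * τ ^ 2 * (gH τ p Y Z * gH τ p X N - gH τ p X Z * gH τ p Y N)
      + 4 * τ ^ 2 * (gH τ p Y (E3 p) * gH τ p Z (E3 p) * gH τ p X N
        - gH τ p X (E3 p) * gH τ p Z (E3 p) * gH τ p Y N
        + gH τ p Y Z * gH τ p X (E3 p) * gH τ p (E3 p) N
        - gH τ p X Z * gH τ p Y (E3 p) * gH τ p (E3 p) N) := by
  simp only [Rpt, gH_add_left, gH_sub_left, gH_smul_left]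

/-- the Codazzi equation for a surface in ℍ₃(τ):
∇_X A(Y) − ∇_Y A(X) − A[X,Y] = −4εντ²[g(Y,T)X − g(X,T)Y].
Here C denotes the tangent vector ∇_X A(Y) − ∇_Y A(X) − A[X,Y], characterized by the
hypersurface Codazzi equation g(R(X,Y)Z,N) = g(C,Z) for tangent Z. -/
theorem statement9 (τ ε ν : ℝ) (hτ : τ ≠ 0) (p : Pt) (N T X Y C : Vec)
    (hε : ε = 1 ∨ ε = -1)
    (hN : gH τ p N N = ε)
    (hdec : E3 p = T + ν • N)
    (hTtan : gH τ p T N = 0)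
    (hXtan : gH τ p X N = 0) (hYtan : gH τ p Y N = 0)
    (hnd : gH τ p X X * gH τ p Y Y - (gH τ p X Y) ^ 2 ≠ 0)
    (hTspan : T ∈ Submodule.span ℝ ({X, Y} : Set Vec))
    (hCspan : C ∈ Submodule.span ℝ ({X, Y} : Set Vec))
    (hcod : ∀ Z ∈ Submodule.span ℝ ({X, Y} : Set Vec),
      gH τ p (Rpt τ p X Y Z) N = gH τ p C Z) :
    C = (-(4 * ε * ν * τ ^ 2)) • (gH τ p Y T • X - gH τ p X T • Y) := by
  obtain ⟨a, b, hC⟩ := Submodule.mem_span_pair.mp hCspan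
  have hXmem : X ∈ Submodule.span ℝ ({X, Y} : Set Vec) :=
    Submodule.subset_span (Set.mem_insert _ _)
  have hYmem : Y ∈ Submodule.span ℝ ({X, Y} : Set Vec) :=
    Submodule.subset_span (Set.mem_insert_of_mem _ rfl)
  set gXX := gH τ p X X with hgXX
  set gXY := gH τ p X Y with hgXY
  set gYY := gH τ p Y Y with hgYY
  set gXT := gH τ p X T with hgXT
  set gYT := gH τ p Y T with hgYT
  -- E3 pairings
  have hXE : gH τ p X (E3 p) = gXT := by
    rw [hdec, gH_add_right, gH_smul_right, hXtan]; ring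
  have hYE : gH τ p Y (E3 p) = gYT := by
    rw [hdec, gH_add_right, gH_smul_right, hYtan]; ring
  have hEN : gH τ p (E3 p) N = ν * ε := by
    rw [hdec, gH_add_left, gH_smul_left, hTtan, hN]; ring
  -- pairings of C
  have hCX : gH τ p C X = a * gXX + b * gXY := by
    rw [← hC, gH_add_left, gH_smul_left, gH_smul_left, gH_comm τ p Y X]
  have hCY : gH τ p C Y = a * gXY + b * gYY := by
    rw [← hC, gH_add_left, gH_smul_left, gH_smul_left]
  -- Codazzi at Z = X and Z = Y
  have e1 := hcod X hXmem
  have e2 := hcod Y hYmem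
  rw [gH_Rpt, hXtan, hYtan, hXE, hYE, hEN, hCX] at e1
  rw [show gH τ p Y X = gXY from (gH_comm τ p Y X).trans hgXY.symm, ← hgXX] at e1
  rw [gH_Rpt, hXtan, hYtan, hXE, hYE, hEN, hCY] at e2
  rw [← hgXY, ← hgYY] at e2
  -- coefficients of C - RHS
  set c1 := a + 4 * ε * ν * τ ^ 2 * gYT with hc1
  set c2 := b - 4 * ε * ν * τ ^ 2 * gXT with hc2
  have k1 : c1 * gXX + c2 * gXY = 0 := by rw [hc1, hc2]; linear_combination -e1
  have k2 : c1 * gXY + c2 * gYY = 0 := by rw [hc1, hc2]; linear_combination -e2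
  have hc1z : c1 = 0 := by
    have h : c1 * (gXX * gYY - gXY ^ 2) = 0 := by
      linear_combination gYY * k1 - gXY * k2
    rcases mul_eq_zero.mp h with h | h
    · exact h
    · exact absurd h hnd
  have hc2z : c2 = 0 := by
    have h : c2 * (gXX * gYY - gXY ^ 2) = 0 := by
      linear_combination gXX * k2 - gXY * k1
    rcases mul_eq_zero.mp h with h | h
    · exact h
    · exact absurd h hnd
  have ha : a = -(4 * ε * ν * τ ^ 2) * gYT := by
    have := hc1z; rw [hc1] at this; linarith
  have hb : b = 4 * ε * ν * τ ^ 2 * gXT := by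
    have := hc2z; rw [hc2] at this; linarith
  rw [← hC, ha, hb]
  module
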